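/- Suppose ν(g_th) is implicitly defined by (ν - 1/g_th) + c - ν ln(ν g_th) = 0 with c > 0 and ν g_th > 1, and let R(g_th) = ∫_{g_th}^∞ ln(ν(g_th) g) f(g) dg with f a positive continuous pdf. Then R is strictly decreasing in g_th, because both ν(g_th) is decreasing (by the implicit function theorem) and raising g_th removes positive contributions ln(ν g) ≥ ln(ν g_th) > 0 from the integral. -/

import Mathlib

open Real MeasureTheory Set

private lemma stmt11_hmono : StrictMonoOn (fun x : ℝ => x * Real.log x - x + 1) (Set.Ici 1) := by
  apply strictMonoOn_of_deriv_pos (convex_Ici 1)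
  · exact ((Real.continuous_mul_log.sub continuous_id).add continuous_const).continuousOn
  · intro x hx
    rw [interior_Ici] at hx
    have hx1 : (1:ℝ) < x := hx
    have hx0 : x ≠ 0 := by positivity
    have hd : HasDerivAt (fun x : ℝ => x * Real.log x - x + 1) (Real.log x) x := by
      have h1 := Real.hasDerivAt_mul_log hx0
      have h2 := (h1.sub (hasDerivAt_id x)).add_const 1
      simpa using h2
    rw [hd.deriv]
    exact Real.log_pos hx1

theorem stmt11 (c : ℝ) (hc : 0 < c) (f : ℝ → ℝ) (νf : ℝ → ℝ)
    (hf_cont : Continuous f) (hf_pos : ∀ x, 0 < f x)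
    (hf_pdf : ∫ x, f x = 1)
    (hν_pos : ∀ a, 0 < a → 0 < νf a)
    (hν_prod : ∀ a, 0 < a → 1 < νf a * a)
    (hν_eq : ∀ a, 0 < a →
      (νf a - 1 / a) + c - νf a * Real.log (νf a * a) = 0)
    (hint : ∀ a, 0 < a → ∀ ν', 0 < ν' →
      IntegrableOn (fun g => Real.log (ν' * g) * f g) (Set.Ioi a)) :
    StrictAntiOn (fun a : ℝ => ∫ g in Set.Ioi a, Real.log (νf a * g) * f g)
      (Set.Ioi 0) := by
  -- the key algebraic identity: (νa)·log(νa) - νa + 1 = c·a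
  have key : ∀ a, 0 < a →
      (νf a * a) * Real.log (νf a * a) - (νf a * a) + 1 = c * a := by
    intro a ha
    have e := hν_eq a ha
    rw [one_div] at e
    have e' : a⁻¹ = νf a + c - νf a * Real.log (νf a * a) := by linarith
    have hinv : a * a⁻¹ = 1 := mul_inv_cancel₀ ha.ne'
    linear_combination a * e' - hinv
  -- monotonicity of νf
  have hν_anti : ∀ a b : ℝ, 0 < a → a < b → νf b ≤ νf a := by
    intro a b ha hab
    have hb : 0 < b := ha.trans hab
    set x := νf a * a with hxdef
    set y := νf b * b with hydef
    have hx1 : 1 < x := hν_prod a ha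
    have hy1 : 1 < y := hν_prod b hb
    have hxa := key a ha
    have hyb := key b hb
    set t := b / a with htdef
    have ht1 : 1 < t := (one_lt_div ha).mpr hab
    have ht0 : 0 < t := by linarith
    have hta : t * a = b := div_mul_cancel₀ b ha.ne'
    -- t * log t ≥ t - 1
    have hlog : t - 1 ≤ t * Real.log t := by
      have h1 := Real.log_le_sub_one_of_pos (show (0:ℝ) < t⁻¹ by positivity)
      rw [Real.log_inv] at h1
      have h2 : t * t⁻¹ = 1 := mul_inv_cancel₀ ht0.ne'
      nlinarith
    -- h(t*x) ≥ c * b = h(y)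
    have htx : (t * x) * Real.log (t * x) - (t * x) + 1 =
        t * x * Real.log t + t * x * Real.log x - t * x + 1 := by
      rw [Real.log_mul ht0.ne' (by linarith : x ≠ 0)]; ring
    have hge : y * Real.log y - y + 1 ≤ (t * x) * Real.log (t * x) - (t * x) + 1 := by
      rw [htx, hyb]
      have hcb : c * b = t * (c * a) := by rw [← hta]; ring
      have e3 : t * x * Real.log x - t * x + t = c * b := by
        rw [hcb]; linear_combination t * hxa
      have h2 : t * Real.log t ≤ t * x * Real.log t := by
        have := Real.log_pos ht1
        nlinarith
      linarith
    have hmem1 : y ∈ Set.Ici (1:ℝ) := le_of_lt hy1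
    have hmem2 : t * x ∈ Set.Ici (1:ℝ) := by
      have : 1 < t * x := by nlinarith
      exact le_of_lt this
    have hyx : y ≤ t * x := by
      have := stmt11_hmono.le_iff_le hmem1 hmem2
      simpa using this.mp hge
    -- conclude νf b ≤ νf a
    have : νf b * b ≤ νf a * b := by
      have htx2 : t * x = νf a * b := by
        rw [hxdef, htdef]; field_simp
      calc νf b * b = y := rfl
        _ ≤ t * x := hyx
        _ = νf a * b := htx2
    exact le_of_mul_le_mul_right (by simpa [mul_comm] using this) hb
  -- main argument
  intro a ha b hb hab
  have ha' : 0 < a := ha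
  have hb' : 0 < b := hb
  have hνa := hν_pos a ha'
  have hνb := hν_pos b hb'
  have hle : νf b ≤ νf a := hν_anti a b ha' hab
  have hIb_b : IntegrableOn (fun g => Real.log (νf b * g) * f g) (Set.Ioi b) :=
    hint b hb' (νf b) hνb
  have hIb_a : IntegrableOn (fun g => Real.log (νf a * g) * f g) (Set.Ioi b) :=
    (hint a ha' (νf a) hνa).mono_set (Set.Ioi_subset_Ioi hab.le)
  have hIoc_a : IntegrableOn (fun g => Real.log (νf a * g) * f g) (Set.Ioc a b) :=
    (hint a ha' (νf a) hνa).mono_set Set.Ioc_subset_Ioi_self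
  -- step 1: comparing at fixed domain Ioi b
  have step1 : ∫ g in Set.Ioi b, Real.log (νf b * g) * f g ≤
      ∫ g in Set.Ioi b, Real.log (νf a * g) * f g := by
    apply setIntegral_mono_on hIb_b hIb_a measurableSet_Ioi
    intro g hg
    have hg0 : 0 < g := hb'.trans hg
    have h1 : (0:ℝ) < νf b * g := by positivity
    have h2 : νf b * g ≤ νf a * g := by nlinarith
    exact mul_le_mul_of_nonneg_right (Real.log_le_log h1 h2) (hf_pos g).le
  -- split the integral over Ioi a
  have hsplit : ∫ g in Set.Ioi a, Real.log (νf a * g) * f g =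
      (∫ g in Set.Ioc a b, Real.log (νf a * g) * f g) +
      (∫ g in Set.Ioi b, Real.log (νf a * g) * f g) := by
    rw [← setIntegral_union (Set.Ioc_disjoint_Ioi le_rfl) measurableSet_Ioi hIoc_a hIb_a,
      Set.Ioc_union_Ioi_eq_Ioi hab.le]
  -- the middle part is strictly positive
  have hpos : 0 < ∫ g in Set.Ioc a b, Real.log (νf a * g) * f g := by
    rw [setIntegral_pos_iff_support_of_nonneg_ae _ hIoc_a]
    · have hsub : Set.Ioc a b ⊆ Function.support fun g => Real.log (νf a * g) * f g := by
        intro g hg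
        have hag : a < g := hg.1
        have hg0 : 0 < g := ha'.trans hag
        have h1 : 1 < νf a * g := by nlinarith [hν_prod a ha']
        have : 0 < Real.log (νf a * g) * f g :=
          mul_pos (Real.log_pos h1) (hf_pos g)
        exact this.ne'
      have : Function.support (fun g => Real.log (νf a * g) * f g) ∩ Set.Ioc a b
          = Set.Ioc a b := Set.inter_eq_self_of_subset_right hsub
      rw [this, Real.volume_Ioc]
      simp [hab]
    · filter_upwards [ae_restrict_mem measurableSet_Ioc] with g hg
      have hag : a < g := hg.1
      have h1 : 1 ≤ νf a * g := by nlinarith [hν_prod a ha', ha']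
      exact mul_nonneg (Real.log_nonneg h1) (hf_pos g).le
  calc (fun a : ℝ => ∫ g in Set.Ioi a, Real.log (νf a * g) * f g) b
      = ∫ g in Set.Ioi b, Real.log (νf b * g) * f g := rfl
    _ ≤ ∫ g in Set.Ioi b, Real.log (νf a * g) * f g := step1
    _ < (∫ g in Set.Ioc a b, Real.log (νf a * g) * f g) +
        (∫ g in Set.Ioi b, Real.log (νf a * g) * f g) := by linarith
    _ = ∫ g in Set.Ioi a, Real.log (νf a * g) * f g := hsplit.symm
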